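/- For every ℓ ∈ ℙ¹(ℂ), the fiber {z ∈ ℂ⁴ : (z, ℓ) ∈ U} of the projection U → ℙ¹(ℂ) is a ℂ-linear subspace of ℂ⁴ of complex dimension 2. (Thus the small resolution U is the total space of a rank-2 complex vector bundle over ℙ¹.) -/

import Mathlib

open scoped LinearAlgebra.Projectivization

/-- The small resolution `U ⊂ ℂ⁴ × ℙ¹(ℂ)` of the threefold node, cut out by
`y₀z₄ − y₁z₃ = 0` and `y₀z₁ + y₁z₂ = 0` for every nonzero representative `(y₀,y₁)`. -/
def smallRes : Set ((Fin 4 → ℂ) × ℙ ℂ (Fin 2 → ℂ)) :=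
  {p | ∀ (y : Fin 2 → ℂ) (hy : y ≠ 0), Projectivization.mk ℂ y hy = p.2 →
    y 0 * p.1 3 - y 1 * p.1 2 = 0 ∧ y 0 * p.1 0 + y 1 * p.1 1 = 0}

theorem stmt4 (ℓ : ℙ ℂ (Fin 2 → ℂ)) :
    ∃ W : Submodule ℂ (Fin 4 → ℂ),
      (W : Set (Fin 4 → ℂ)) = {z : Fin 4 → ℂ | (z, ℓ) ∈ smallRes} ∧
      Module.finrank ℂ ↥W = 2 := by
  set y : Fin 2 → ℂ := ℓ.rep with hyrep
  have hy : y ≠ 0 := ℓ.rep_nonzero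
  set g1 : (Fin 4 → ℂ) →ₗ[ℂ] ℂ :=
    y 0 • LinearMap.proj 3 - y 1 • LinearMap.proj 2 with hg1
  set g2 : (Fin 4 → ℂ) →ₗ[ℂ] ℂ :=
    y 0 • LinearMap.proj 0 + y 1 • LinearMap.proj 1 with hg2
  set f : (Fin 4 → ℂ) →ₗ[ℂ] ℂ × ℂ := g1.prod g2 with hf
  have hfz : ∀ z : Fin 4 → ℂ, f z = (y 0 * z 3 - y 1 * z 2, y 0 * z 0 + y 1 * z 1) := by
    intro z; rfl
  refine ⟨LinearMap.ker f, ?_, ?_⟩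
  · ext z
    simp only [SetLike.mem_coe, LinearMap.mem_ker, Set.mem_setOf_eq, smallRes, hfz, Prod.mk_eq_zero]
    constructor
    · rintro ⟨h1, h2⟩ y' hy' hmk
      rw [← Projectivization.mk_rep ℓ, Projectivization.mk_eq_mk_iff] at hmk
      · obtain ⟨a, ha⟩ := hmk
        have h0 : y' 0 = (a : ℂ) * y 0 := by
          have := congrFun ha 0
          simpa [Units.smul_def] using this.symm
        have h1' : y' 1 = (a : ℂ) * y 1 := by
          have := congrFun ha 1
          simpa [Units.smul_def] using this.symm
        constructor
        · rw [h0, h1']; linear_combination (a : ℂ) * h1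
        · rw [h0, h1']; linear_combination (a : ℂ) * h2
    · intro h
      exact h y hy ℓ.mk_rep
  · have hsurj : Function.Surjective f := by
      rintro ⟨a, b⟩
      rcases eq_or_ne (y 0) 0 with h0 | h0
      · have h1 : y 1 ≠ 0 := by
          intro h1
          apply hy; funext i; fin_cases i <;> simp [h0, h1]
        refine ⟨![0, b / y 1, -(a / y 1), 0], ?_⟩
        rw [hfz]
        show (y 0 * 0 - y 1 * -(a / y 1), y 0 * 0 + y 1 * (b / y 1)) = (a, b)
        rw [Prod.mk.injEq]
        constructor <;> field_simp <;> ring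
      · refine ⟨![b / y 0, 0, 0, a / y 0], ?_⟩
        rw [hfz]
        show (y 0 * (a / y 0) - y 1 * 0, y 0 * (b / y 0) + y 1 * 0) = (a, b)
        rw [Prod.mk.injEq]
        constructor <;> field_simp <;> ring
    have hrank := LinearMap.finrank_range_add_finrank_ker f
    rw [LinearMap.range_eq_top.mpr hsurj, finrank_top] at hrank
    have h1 : Module.finrank ℂ (ℂ × ℂ) = 2 := by simp
    have h2 : Module.finrank ℂ (Fin 4 → ℂ) = 4 := by simp
    omega
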